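/- arXiv:1512.00080 — 2 statements merged into one kernel-verified Lean document; each statement's English description precedes it below -/
import Mathlib

section
/- Let n ≥ 1 and let F be a facet of Δ(n) with elements listed in increasing order as v_1, …, v_r, where v_ℓ = (i_ℓ, j_ℓ, k_ℓ). Fix ℓ with 1 ≤ ℓ ≤ r and a coordinate position a ∈ {first, second, third} such that a_{ℓ+1} - a_ℓ > 1 if ℓ < r, or a_r < n if ℓ = r (where a_m denotes the a-coordinate of v_m). Let v' be the triple obtained from v_ℓ by increasing its a-coordinate by 1, and let G = (F \ {v_ℓ}) ∪ {v'}. Suppose the up-twist is safe, i.e.: if ℓ > 1, then min over the three coordinates of (v' minus v_{ℓ-1}) equals 1; and if ℓ = 1, then the minimum coordinate of v' equals 1. Then G is a facet of Δ(n). -/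
/-- Vertices of `Δ(n)`: integer triples. -/
abbrev V : Type := ℕ × ℕ × ℕ

/-- The strict componentwise order on triples. -/
def slt (u v : V) : Prop := u.1 < v.1 ∧ u.2.1 < v.2.1 ∧ u.2.2 < v.2.2

/-- A face of `Δ(n)`: a finite subset of `{1,…,n}³` that is a chain under `slt`. -/
def IsFace (n : ℕ) (F : Finset V) : Prop :=
  (∀ v ∈ F, v.1 ∈ Finset.Icc 1 n ∧ v.2.1 ∈ Finset.Icc 1 n ∧ v.2.2 ∈ Finset.Icc 1 n) ∧
  (∀ u ∈ F, ∀ v ∈ F, u ≠ v → slt u v ∨ slt v u)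

/-- A facet of `Δ(n)`: an inclusion-maximal face. -/
def IsFacet (n : ℕ) (F : Finset V) : Prop :=
  IsFace n F ∧ ∀ G : Finset V, IsFace n G → F ⊆ G → F = G

/-- The `a`-th coordinate of a triple. -/
def coord (a : Fin 3) (v : V) : ℕ := ![v.1, v.2.1, v.2.2] a

/-- Replace the `a`-th coordinate of a triple by `x`. -/
def setCoord (a : Fin 3) (x : ℕ) (v : V) : V :=
  if a = 0 then (x, v.2.1, v.2.2) else if a = 1 then (v.1, x, v.2.2) else (v.1, v.2.1, x)


lemma coord_zero (v : V) : coord 0 v = v.1 := rfl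
lemma coord_one (v : V) : coord 1 v = v.2.1 := rfl
lemma coord_two (v : V) : coord 2 v = v.2.2 := rfl

lemma coord_setCoord (a b : Fin 3) (x : ℕ) (v : V) :
    coord b (setCoord a x v) = if b = a then x else coord b v := by
  fin_cases a <;> fin_cases b <;> simp [coord, setCoord]

lemma slt_iff_coord {u w : V} : slt u w ↔ ∀ b : Fin 3, coord b u < coord b w := by
  constructor
  · rintro ⟨h1, h2, h3⟩ b
    fin_cases b <;> simpa [coord]
  · intro h
    exact ⟨h 0, h 1, h 2⟩

lemma range_coord {n : ℕ} {u : V}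
    (h : u.1 ∈ Finset.Icc 1 n ∧ u.2.1 ∈ Finset.Icc 1 n ∧ u.2.2 ∈ Finset.Icc 1 n) :
    ∀ b : Fin 3, 1 ≤ coord b u ∧ coord b u ≤ n := by
  simp only [Finset.mem_Icc] at h
  intro b; fin_cases b <;> simp [coord] <;> omega

lemma range_of_coord {n : ℕ} {u : V} (h : ∀ b : Fin 3, 1 ≤ coord b u ∧ coord b u ≤ n) :
    u.1 ∈ Finset.Icc 1 n ∧ u.2.1 ∈ Finset.Icc 1 n ∧ u.2.2 ∈ Finset.Icc 1 n := by
  simp only [Finset.mem_Icc]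
  exact ⟨h 0, h 1, h 2⟩

/-- Safe up-twists of facets are facets (Lemma 4.6, up-twist case).
`L` lists the facet `F` in increasing order; `ℓ` is the (0-based) index of the twisted
vertex, `a` the coordinate being increased.  The twist is possible (`hgap_mid`/`hgap_last`)
and safe (`hsafe1`/`hsafe0`). -/
theorem safe_up_twist_is_facet (n : ℕ) (hn : 1 ≤ n) (F : Finset V) (hF : IsFacet n F)
    (L : List V) (hsort : L.Chain' slt) (htf : L.toFinset = F)
    (ℓ : ℕ) (hℓ : ℓ < L.length) (a : Fin 3) (v' : V)
    (hv' : v' = setCoord a (coord a (L.get ⟨ℓ, hℓ⟩) + 1) (L.get ⟨ℓ, hℓ⟩))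
    (hgap_mid : ∀ h : ℓ + 1 < L.length,
      1 < coord a (L.get ⟨ℓ + 1, h⟩) - coord a (L.get ⟨ℓ, hℓ⟩))
    (hgap_last : ℓ + 1 = L.length → coord a (L.get ⟨ℓ, hℓ⟩) < n)
    (hsafe1 : ∀ h : 0 < ℓ,
      min (v'.1 - (L.get ⟨ℓ - 1, by omega⟩).1)
        (min (v'.2.1 - (L.get ⟨ℓ - 1, by omega⟩).2.1)
          (v'.2.2 - (L.get ⟨ℓ - 1, by omega⟩).2.2)) = 1)
    (hsafe0 : ℓ = 0 → min v'.1 (min v'.2.1 v'.2.2) = 1) :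
    IsFacet n (insert v' (F.erase (L.get ⟨ℓ, hℓ⟩))) := by
  obtain ⟨⟨hrange, hchain⟩, hmax⟩ := hF
  set v : V := L.get ⟨ℓ, hℓ⟩ with hvdef
  have hmemF : ∀ u : V, u ∈ F ↔ u ∈ L := by
    intro u; rw [← htf, List.mem_toFinset]
  haveI : IsTrans V slt := ⟨by rintro x y z ⟨_,_,_⟩ ⟨_,_,_⟩; exact ⟨by omega, by omega, by omega⟩⟩
  have hpw : L.Pairwise slt := List.isChain_iff_pairwise.mp hsort
  have hget : ∀ (i j : Fin L.length), i < j → slt (L.get i) (L.get j) :=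
    fun i j h => List.pairwise_iff_get.mp hpw i j h
  have hvF : v ∈ F := (hmemF v).mpr (L.get_mem _)
  have hca : coord a v' = coord a v + 1 := by rw [hv', coord_setCoord]; simp
  have hcb : ∀ b, b ≠ a → coord b v' = coord b v := by
    intro b hb; rw [hv', coord_setCoord, if_neg hb]
  have hle : ∀ b, coord b v ≤ coord b v' := by
    intro b; by_cases h : b = a
    · subst h; omega
    · rw [hcb b h]
  have key : ∀ u ∈ F, slt v u → coord a v + 2 ≤ coord a u := by
    intro u huF hvu
    obtain ⟨m, hm⟩ := List.mem_iff_get.mp ((hmemF u).mp huF)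
    have hml : ℓ < (m : ℕ) := by
      rcases lt_trichotomy ((m : ℕ)) ℓ with h | h | h
      · exfalso
        have := hget m ⟨ℓ, hℓ⟩ h
        rw [hm, ← hvdef] at this
        obtain ⟨_,_,_⟩ := this; obtain ⟨_,_,_⟩ := hvu; omega
      · exfalso
        have huv : u = v := by rw [← hm, hvdef]; congr 1; exact Fin.ext h
        rw [huv] at hvu; obtain ⟨_,_,_⟩ := hvu; omega
      · exact h
    have h1 : ℓ + 1 < L.length := by have := m.isLt; omega
    have hgap := hgap_mid h1
    have hle2 : coord a (L.get ⟨ℓ+1, h1⟩) ≤ coord a u := by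
      rcases eq_or_lt_of_le (show ℓ+1 ≤ (m:ℕ) by omega) with h | h
      · rw [← hm]
        have : (⟨ℓ+1, h1⟩ : Fin L.length) = m := Fin.ext h
        rw [this]
      · have hs := hget ⟨ℓ+1, h1⟩ m h
        rw [hm] at hs
        exact le_of_lt ((slt_iff_coord.mp hs) a)
    have hlt : coord a v < coord a (L.get ⟨ℓ+1,h1⟩) :=
      (slt_iff_coord.mp (hget ⟨ℓ,hℓ⟩ ⟨ℓ+1,h1⟩ (by exact Fin.mk_lt_mk.mpr (by omega)))) a
    omega
  have hv'a_le : coord a v' ≤ n := by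
    rcases lt_or_eq_of_le (show ℓ + 1 ≤ L.length by omega) with h1 | h1
    · have hgap := hgap_mid h1
      have hnext : L.get ⟨ℓ+1, h1⟩ ∈ F := (hmemF _).mpr (L.get_mem _)
      have := (range_coord (hrange _ hnext)) a
      omega
    · have := hgap_last h1; omega
  have hv'range : ∀ b : Fin 3, 1 ≤ coord b v' ∧ coord b v' ≤ n := by
    intro b
    have hvr := (range_coord (hrange v hvF)) b
    by_cases h : b = a
    · subst h; omega
    · rw [hcb b h]; exact hvr
  have cmp : ∀ u ∈ F.erase v, slt u v' ∨ slt v' u := by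
    intro u hu
    have huF := Finset.mem_of_mem_erase hu
    have hune : u ≠ v := Finset.ne_of_mem_erase hu
    rcases hchain u huF v hvF hune with h | h
    · exact Or.inl (slt_iff_coord.mpr (fun b => lt_of_lt_of_le ((slt_iff_coord.mp h) b) (hle b)))
    · refine Or.inr (slt_iff_coord.mpr (fun b => ?_))
      by_cases hb : b = a
      · subst hb; have := key u huF h; omega
      · rw [hcb b hb]; exact (slt_iff_coord.mp h) b
  have hGface : IsFace n (insert v' (F.erase v)) := by
    constructor
    · intro u hu
      rcases Finset.mem_insert.mp hu with h | h
      · subst h; exact range_of_coord hv'range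
      · exact hrange u (Finset.mem_of_mem_erase h)
    · intro u1 h1 u2 h2 hne
      rcases Finset.mem_insert.mp h1 with e1 | e1 <;> rcases Finset.mem_insert.mp h2 with e2 | e2
      · exact absurd (e1.trans e2.symm) hne
      · subst e1; exact (cmp u2 e2).symm
      · subst e2; exact cmp u1 e1
      · exact hchain u1 (Finset.mem_of_mem_erase e1) u2 (Finset.mem_of_mem_erase e2) hne
  refine ⟨hGface, ?_⟩
  intro H hHface hGH
  refine Finset.Subset.antisymm hGH ?_
  intro w hwH
  by_contra hwG
  have hv'H : v' ∈ H := hGH (Finset.mem_insert_self _ _)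
  have herase_sub : F.erase v ⊆ H := fun x hx => hGH (Finset.mem_insert_of_mem hx)
  have hwrange := range_coord (hHface.1 w hwH)
  have hne_v' : w ≠ v' := fun h => hwG (h ▸ Finset.mem_insert_self _ _)
  by_cases hwv : w = v
  · obtain ⟨b, hba⟩ : ∃ b : Fin 3, b ≠ a := by
      fin_cases a
      exacts [⟨1, by decide⟩, ⟨0, by decide⟩, ⟨0, by decide⟩]
    have hne2 : v ≠ v' := by
      intro h
      have := congrArg (coord a) h
      omega
    rcases hHface.2 v (hwv ▸ hwH) v' hv'H hne2 with h | h
    · have := (slt_iff_coord.mp h) b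
      rw [hcb b hba] at this; omega
    · have := (slt_iff_coord.mp h) a
      omega
  · by_cases hcmpv : slt w v ∨ slt v w
    · have hwF : w ∉ F := by
        intro h
        exact hwG (Finset.mem_insert_of_mem (Finset.mem_erase.mpr ⟨hwv, h⟩))
      have hKface : IsFace n (insert w F) := by
        constructor
        · intro u hu
          rcases Finset.mem_insert.mp hu with h | h
          · rw [h]; exact hHface.1 w hwH
          · exact hrange u h
        · have aux : ∀ u ∈ F, u ≠ w → slt w u ∨ slt u w := by
            intro u huF hneu
            by_cases huv : u = v
            · subst huv; exact hcmpv
            · have huH : u ∈ H := herase_sub (Finset.mem_erase.mpr ⟨huv, huF⟩)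
              rcases hHface.2 w hwH u huH (fun h => hneu h.symm) with h | h
              · exact Or.inl h
              · exact Or.inr h
          intro u1 h1 u2 h2 hne
          rcases Finset.mem_insert.mp h1 with e1 | e1 <;> rcases Finset.mem_insert.mp h2 with e2 | e2
          · exact absurd (e1.trans e2.symm) hne
          · subst e1; exact aux u2 e2 (fun h => hne h.symm)
          · subst e2; exact (aux u1 e1 hne).symm
          · exact hchain u1 e1 u2 e2 hne
      have heq := hmax _ hKface (Finset.subset_insert _ _)
      have : w ∈ F := by rw [heq]; exact Finset.mem_insert_self _ _
      exact hwF this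
    · push_neg at hcmpv
      obtain ⟨hnwv, hnvw⟩ := hcmpv
      rcases hHface.2 w hwH v' hv'H hne_v' with hwv' | hv'w
      · have h1 := slt_iff_coord.mp hwv'
        have hwa : coord a w = coord a v := by
          have h2 : ∃ b, coord b v ≤ coord b w := by
            by_contra hc; push_neg at hc
            exact hnwv (slt_iff_coord.mpr hc)
          obtain ⟨b, hb⟩ := h2
          by_cases hba : b = a
          · subst hba; have := h1 b; omega
          · exfalso; have := h1 b; rw [hcb b hba] at this; omega
        rcases Nat.eq_zero_or_pos ℓ with hl0 | hlpos
        · have hs := hsafe0 hl0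
          have h2 : ∀ b, 2 ≤ coord b v' := by
            intro b
            by_cases hba : b = a
            · subst hba; have := (hwrange b).1; omega
            · rw [hcb b hba]
              have h3 := h1 b
              rw [hcb b hba] at h3
              have := (hwrange b).1; omega
          have k0 := h2 0; have k1 := h2 1; have k2 := h2 2
          rw [coord_zero] at k0; rw [coord_one] at k1; rw [coord_two] at k2
          omega
        · have hlm1 : ℓ - 1 < L.length := by omega
          set u : V := L.get ⟨ℓ - 1, hlm1⟩ with hudef
          have hs : min (v'.1 - u.1) (min (v'.2.1 - u.2.1) (v'.2.2 - u.2.2)) = 1 :=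
            hsafe1 hlpos
          have huv : slt u v := hget ⟨ℓ-1, hlm1⟩ ⟨ℓ, hℓ⟩ (Fin.mk_lt_mk.mpr (by omega))
          have huF : u ∈ F := (hmemF u).mpr (L.get_mem _)
          have hunev : u ≠ v := by
            intro h; rw [h] at huv; obtain ⟨h1,_,_⟩ := huv; omega
          have huH : u ∈ H := herase_sub (Finset.mem_erase.mpr ⟨hunev, huF⟩)
          have hneuw : u ≠ w := by
            intro h
            have := (slt_iff_coord.mp huv) a
            rw [h] at this; omega
          have huw : slt u w := by
            rcases hHface.2 u huH w hwH hneuw with h | h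
            · exact h
            · exfalso
              have h3 := (slt_iff_coord.mp h) a
              have h4 := (slt_iff_coord.mp huv) a
              omega
          have hkey2 : ∀ b, coord b u + 2 ≤ coord b v' := by
            intro b
            by_cases hba : b = a
            · subst hba
              have := (slt_iff_coord.mp huw) b
              omega
            · rw [hcb b hba]
              have h3 := (slt_iff_coord.mp huw) b
              have h4 := h1 b
              rw [hcb b hba] at h4
              omega
          have k0 := hkey2 0; have k1 := hkey2 1; have k2 := hkey2 2
          rw [coord_zero, coord_zero] at k0
          rw [coord_one, coord_one] at k1
          rw [coord_two, coord_two] at k2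
          omega
      · exact hnvw (slt_iff_coord.mpr
          (fun b => lt_of_le_of_lt (hle b) ((slt_iff_coord.mp hv'w) b)))
end

section
/- Let n ≥ 1. For all facets F and G of Δ(n) such that F precedes G in the order O, there exist a facet H of Δ(n) preceding G in the order O and a vertex v ∈ G such that F ∩ G ⊆ H ∩ G = G \ {v}. Consequently, the order O is a shelling order of the (non-pure) simplicial complex Δ(n). -/
/-- The σ-word of a list of vertices: concatenate the coordinates in order. -/
def sigmaWord (L : List V) : List ℕ :=
  L.foldr (fun v acc => v.1 :: v.2.1 :: v.2.2 :: acc) []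

/-- `F` precedes `G` in the order `O`: facets of larger cardinality come first, and
facets of equal cardinality are ordered by lexicographic order on their σ-words
(computed from the increasingly sorted listings, which are unique for chains). -/
def OPrec (F G : Finset V) : Prop :=
  G.card < F.card ∨
    (F.card = G.card ∧ ∃ LF LG : List V, LF.Chain' slt ∧ LG.Chain' slt ∧
      LF.toFinset = F ∧ LG.toFinset = G ∧
      List.Lex (· < ·) (sigmaWord LF) (sigmaWord LG))

/-! ### Auxiliary definitions -/

/-- The virtual bottom vertex. -/
def zero3 : V := (0, 0, 0)

/-- The virtual top vertex for `Δ(n)`. -/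
def top3 (n : ℕ) : V := (n + 1, n + 1, n + 1)

/-- Add `j` to every coordinate. -/
def addD (p : V) (j : ℕ) : V := (p.1 + j, p.2.1 + j, p.2.2 + j)

/-- A step of a facet chain: strict componentwise increase, with increment exactly 1
in some coordinate. -/
def step1 (u v : V) : Prop :=
  slt u v ∧ (v.1 = u.1 + 1 ∨ v.2.1 = u.2.1 + 1 ∨ v.2.2 = u.2.2 + 1)

/-- A list is a facet listing iff the padded list (with virtual endpoints) is a
`step1`-chain. -/
def FacetList (n : ℕ) (L : List V) : Prop :=
  List.Chain' step1 (zero3 :: (L ++ [top3 n]))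

/-- `diag p k = [p+1, p+2, …, p+k]` (diagonal additions). -/
def diag (p : V) : ℕ → List V
  | 0 => []
  | k + 1 => addD p 1 :: diag (addD p 1) k

/-! ### Basic lemmas -/

lemma V_ext {a b : V} (h1 : a.1 = b.1) (h2 : a.2.1 = b.2.1) (h3 : a.2.2 = b.2.2) : a = b := by
  obtain ⟨x1, x2, x3⟩ := a; obtain ⟨y1, y2, y3⟩ := b; simp_all

lemma slt_trans {a b c : V} (h1 : slt a b) (h2 : slt b c) : slt a c := by
  simp only [slt] at *; omega

lemma slt_irrefl (a : V) : ¬ slt a a := by simp [slt]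

lemma slt_asymm {a b : V} (h1 : slt a b) (h2 : slt b a) : False := by
  simp only [slt] at *; omega

lemma slt_ne {a b : V} (h : slt a b) : a ≠ b := by
  rintro rfl; exact slt_irrefl a h

instance : IsTrans V slt := ⟨fun _ _ _ h1 h2 => slt_trans h1 h2⟩
instance : IsIrrefl V slt := ⟨fun a => slt_irrefl a⟩
instance : IsAntisymm V slt := ⟨fun _ _ h1 h2 => absurd h2.1 (by simp only [slt] at h1 ⊢; omega)⟩

@[simp] lemma addD_zero (p : V) : addD p 0 = p := by simp [addD]

lemma addD_addD (p : V) (i j : ℕ) : addD (addD p i) j = addD p (i + j) := by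
  apply V_ext <;> simp [addD] <;> omega

lemma step1_addD_one (p : V) : step1 p (addD p 1) :=
  ⟨by simp [slt, addD], Or.inl (by simp [addD])⟩

lemma noRoom {a b w : V} (h : step1 a b) (h1 : slt a w) (h2 : slt w b) : False := by
  simp only [step1, slt] at *; omega

lemma sigmaWord_nil : sigmaWord [] = [] := rfl

lemma sigmaWord_cons (v : V) (L : List V) :
    sigmaWord (v :: L) = v.1 :: v.2.1 :: v.2.2 :: sigmaWord L := rfl

lemma sigmaWord_append (X Y : List V) :
    sigmaWord (X ++ Y) = sigmaWord X ++ sigmaWord Y := by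
  induction X with
  | nil => simp [sigmaWord_nil]
  | cons a X ih => simp [sigmaWord_cons, ih]

lemma lex_append_left {x y : List ℕ} (C : List ℕ) (h : List.Lex (· < ·) x y) :
    List.Lex (· < ·) (C ++ x) (C ++ y) := by
  induction C with
  | nil => exact h
  | cons c C ih => exact List.Lex.cons ih

lemma lex_cancel {x y : List ℕ} (C : List ℕ) (h : List.Lex (· < ·) (C ++ x) (C ++ y)) :
    List.Lex (· < ·) x y := by
  induction C with
  | nil => exact h
  | cons c C ih =>
    cases h with
    | cons h' => exact ih h'
    | rel h' => exact absurd h' (lt_irrefl c)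

lemma lex_irrefl : ∀ (w : List ℕ), ¬ List.Lex (· < ·) w w := by
  intro w; induction w with
  | nil => intro h; cases h
  | cons a w ih =>
    intro h
    cases h with
    | cons h' => exact ih h'
    | rel h' => exact lt_irrefl _ h'

lemma lex_triple {u v : V} (w1 w2 : List ℕ) (h1 : u.1 ≤ v.1) (h2 : u.2.1 ≤ v.2.1)
    (h3 : u.2.2 ≤ v.2.2) (hne : u ≠ v) :
    List.Lex (· < ·) (u.1 :: u.2.1 :: u.2.2 :: w1) (v.1 :: v.2.1 :: v.2.2 :: w2) := by
  rcases h1.lt_or_eq with h1 | h1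
  · exact List.Lex.rel h1
  · rw [h1]
    rcases h2.lt_or_eq with h2 | h2
    · exact List.Lex.cons (List.Lex.rel h2)
    · rw [h2]
      rcases h3.lt_or_eq with h3 | h3
      · exact List.Lex.cons (List.Lex.cons (List.Lex.rel h3))
      · exact absurd (V_ext h1 h2 h3) hne

lemma lex_ge_false {u v : V} (w1 w2 : List ℕ) (h1 : v.1 ≤ u.1) (h2 : v.2.1 ≤ u.2.1)
    (h3 : v.2.2 ≤ u.2.2) (hne : u ≠ v)
    (h : List.Lex (· < ·) (u.1 :: u.2.1 :: u.2.2 :: w1) (v.1 :: v.2.1 :: v.2.2 :: w2)) :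
    False :=
  asymm h (lex_triple w2 w1 h1 h2 h3 (Ne.symm hne))

lemma first_diff : ∀ (L1 L2 : List V), L1.length = L2.length → L1 ≠ L2 →
    ∃ C f g BF BG, L1 = C ++ f :: BF ∧ L2 = C ++ g :: BG ∧ f ≠ g := by
  intro L1
  induction L1 with
  | nil =>
    intro L2 hl hne
    cases L2 with
    | nil => exact absurd rfl hne
    | cons y t => simp at hl
  | cons x t ih =>
    intro L2 hl hne
    cases L2 with
    | nil => simp at hl
    | cons y t2 =>
      by_cases hxy : x = y
      · subst hxy
        have hne' : t ≠ t2 := fun h => hne (by rw [h])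
        obtain ⟨C, f, g, BF, BG, e1, e2, hfg⟩ := ih t2 (by simpa using hl) hne'
        exact ⟨x :: C, f, g, BF, BG, by simp [e1], by simp [e2], hfg⟩
      · exact ⟨[], x, y, t, t2, rfl, rfl, hxy⟩

lemma chainlenF (f : V → ℕ) (hf : ∀ u v : V, slt u v → f u < f v) :
    ∀ (L : List V) (c g : V), List.Chain' slt (c :: (L ++ [g])) → f c + L.length < f g := by
  intro L
  induction L with
  | nil =>
    intro c g h
    have := (List.isChain_cons.mp h).1 g (by simp)
    simpa using hf _ _ this
  | cons x L ih =>
    intro c g h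
    have h1 : slt c x := (List.isChain_cons_cons.mp h).1
    have h2 := ih x g (List.isChain_cons_cons.mp h).2
    have := hf _ _ h1
    simp only [List.length_cons]
    omega

lemma chain'_middle {R : V → V → Prop} (X Y : List V) (a b : V)
    (h : List.Chain' R (X ++ a :: b :: Y)) : R a b :=
  (List.isChain_cons_cons.mp (List.isChain_append.mp h).2.1).1

lemma not_chain'_split {R : V → V → Prop} :
    ∀ (l : List V), ¬ List.Chain' R l → ∃ X a b Y, l = X ++ a :: b :: Y ∧ ¬ R a b := by
  intro l
  induction l with
  | nil => intro h; exact absurd List.isChain_nil h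
  | cons x t ih =>
    intro h
    cases t with
    | nil => exact absurd (List.isChain_singleton x) h
    | cons y t2 =>
      by_cases hxy : R x y
      · have hnc : ¬ List.Chain' R (y :: t2) := fun hc => h (List.isChain_cons_cons.mpr ⟨hxy, hc⟩)
        obtain ⟨X, a, b, Y, e, hr⟩ := ih hnc
        exact ⟨x :: X, a, b, Y, by simp [e], hr⟩
      · exact ⟨[], x, y, t2, rfl, hxy⟩

lemma getLast?_cons_eq : ∀ (A : List V) (c : V), (c :: A).getLast? = some (A.getLastD c) := by
  intro A
  induction A with
  | nil => intro c; rfl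
  | cons a A ih => intro c; rw [List.getLast?_cons_cons, ih a, List.getLastD_cons]

lemma head?_append_singleton (B : List V) (t : V) : (B ++ [t]).head? = some (B.headD t) := by
  cases B <;> rfl

lemma le_getLastD : ∀ (A : List V) (c : V), List.Chain' slt (c :: A) →
    ∀ a ∈ c :: A, a.1 ≤ (A.getLastD c).1 := by
  intro A
  induction A with
  | nil =>
    intro c _ a ha
    simp at ha
    subst ha
    simp [List.getLastD]
  | cons x A ih =>
    intro c hc a ha
    rw [List.getLastD_cons]
    have hcx : slt c x := (List.isChain_cons_cons.mp hc).1
    have hc' : List.Chain' slt (x :: A) := (List.isChain_cons_cons.mp hc).2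
    rcases (by simpa using ha : a = c ∨ a = x ∨ a ∈ A) with rfl | ha'
    · have := ih x hc' x (by simp)
      have := hcx.1
      omega
    · exact ih x hc' a (by simpa using ha')

lemma headD_le (B : List V) (t : V) (h : List.Chain' slt (B ++ [t])) :
    ∀ b ∈ B ++ [t], (B.headD t).1 ≤ b.1 := by
  cases B with
  | nil =>
    intro b hb
    simp at hb
    subst hb
    simp [List.headD]
  | cons x B =>
    intro b hb
    have hpw : List.Pairwise slt ((x :: B) ++ [t]) := List.isChain_iff_pairwise.mp h
    rcases (by simpa using hb : b = x ∨ b ∈ B ∨ b = t) with rfl | hb'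
    · simp [List.headD]
    · have : slt x b := by
        rw [List.cons_append] at hpw
        exact (List.pairwise_cons.mp hpw).1 b (by simpa using hb')
      simp only [List.headD]
      exact le_of_lt this.1

/-! ### Sorted listings of chains -/

lemma exists_chainList : ∀ (F : Finset V),
    (∀ u ∈ F, ∀ v ∈ F, u ≠ v → slt u v ∨ slt v u) →
    ∃ L : List V, L.Chain' slt ∧ L.toFinset = F := by
  intro F
  induction F using Finset.strongInduction with
  | _ F ih =>
    intro hcomp
    rcases F.eq_empty_or_nonempty with rfl | hne
    · exact ⟨[], List.isChain_nil, by simp⟩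
    · obtain ⟨m, hm, hmin⟩ := F.exists_min_image (fun v => v.1) hne
      have hss : F.erase m ⊂ F := Finset.erase_ssubset hm
      obtain ⟨L, hL, hLfin⟩ := ih _ hss (fun u hu v hv huv =>
        hcomp u (Finset.mem_of_mem_erase hu) v (Finset.mem_of_mem_erase hv) huv)
      refine ⟨m :: L, ?_, ?_⟩
      · unfold List.Chain'; rw [List.isChain_cons]
        refine ⟨?_, hL⟩
        intro y hy
        have hyL : y ∈ L := List.mem_of_mem_head? hy
        have hyF : y ∈ F.erase m := by rw [← hLfin]; exact List.mem_toFinset.mpr hyL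
        have hyne : y ≠ m := Finset.ne_of_mem_erase hyF
        rcases hcomp m hm y (Finset.mem_of_mem_erase hyF) (Ne.symm hyne) with h | h
        · exact h
        · exact absurd h.1 (not_lt.mpr (hmin y (Finset.mem_of_mem_erase hyF)))
      · rw [List.toFinset_cons, hLfin, Finset.insert_erase hm]

lemma chain'_nodup {L : List V} (h : List.Chain' slt L) : L.Nodup :=
  (List.isChain_iff_pairwise.mp h).imp (fun hab => slt_ne hab)

lemma chainList_unique {L1 L2 : List V} (h1 : L1.Chain' slt) (h2 : L2.Chain' slt)
    (h : L1.toFinset = L2.toFinset) : L1 = L2 :=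
  List.Perm.eq_of_pairwise'
    (List.isChain_iff_pairwise.mp h1) (List.isChain_iff_pairwise.mp h2)
    (List.perm_of_nodup_nodup_toFinset_eq (chain'_nodup h1) (chain'_nodup h2) h)

/-! ### Facet lists vs facets -/

lemma gap {w : V} : ∀ (P : List V) (a : V), List.Chain' slt (a :: P) → slt a w →
    (∀ x ∈ P, slt x w ∨ slt w x) → slt w (P.getLastD a) →
    ∃ X c d Y, a :: P = X ++ c :: d :: Y ∧ slt c w ∧ slt w d := by
  intro P
  induction P with
  | nil =>
    intro a _ haw _ hwl
    exact absurd haw (by simp only [List.getLastD] at hwl; exact fun h => slt_asymm h hwl)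
  | cons b P ih =>
    intro a hc haw hcomp hwl
    by_cases hwb : slt w b
    · exact ⟨[], a, b, P, rfl, haw, hwb⟩
    · have hbw : slt b w := (hcomp b (by simp)).resolve_right hwb
      have hc' : List.Chain' slt (b :: P) := (List.isChain_cons_cons.mp hc).2
      have hwl' : slt w (P.getLastD b) := by rwa [List.getLastD_cons] at hwl
      obtain ⟨X, c, d, Y, he, hccw, hwd⟩ :=
        ih b hc' hbw (fun x hx => hcomp x (by simp [hx])) hwl'
      exact ⟨a :: X, c, d, Y, by rw [List.cons_append, ← he], hccw, hwd⟩

lemma facetList_chain_slt {n : ℕ} {L : List V} (h : FacetList n L) :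
    List.Chain' slt (zero3 :: (L ++ [top3 n])) :=
  List.IsChain.imp (fun _ _ hab => hab.1) h

lemma facetList_chain_inner {n : ℕ} {L : List V} (h : FacetList n L) :
    List.Chain' slt L :=
  (List.isChain_append.mp (facetList_chain_slt h).tail).1

lemma facetList_nodup {n : ℕ} {L : List V} (h : FacetList n L) : L.Nodup :=
  chain'_nodup (facetList_chain_inner h)

lemma facetList_range {n : ℕ} {L : List V} (h : FacetList n L) :
    ∀ x ∈ L, slt zero3 x ∧ slt x (top3 n) := by
  have hpw : List.Pairwise slt (zero3 :: (L ++ [top3 n])) :=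
    List.isChain_iff_pairwise.mp (facetList_chain_slt h)
  intro x hx
  constructor
  · exact (List.pairwise_cons.mp hpw).1 x (by simp [hx])
  · have hpw2 := (List.pairwise_cons.mp hpw).2
    exact (List.pairwise_append.mp hpw2).2.2 x hx (top3 n) (by simp)

/-- A facet list describes a facet. -/
lemma facetList_isFacet (n : ℕ) (L : List V) (h : FacetList n L) : IsFacet n L.toFinset := by
  have hslt := facetList_chain_slt h
  have hrange := facetList_range h
  constructor
  · constructor
    · intro v hv
      have := hrange v (List.mem_toFinset.mp hv)
      simp only [slt, zero3, top3] at this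
      simp only [Finset.mem_Icc]
      omega
    · intro u hu v hv huv
      have pL : List.Pairwise slt L := List.isChain_iff_pairwise.mp (facetList_chain_inner h)
      have pL' : List.Pairwise (fun u v => slt u v ∨ slt v u) L :=
        pL.imp (fun hab => Or.inl hab)
      have : Std.Symm (fun u v : V => slt u v ∨ slt v u) := ⟨fun _ _ hab => hab.symm⟩
      exact pL'.forall
        (List.mem_toFinset.mp hu) (List.mem_toFinset.mp hv) huv
  · intro G' hG' hsub
    refine Finset.Subset.antisymm hsub (fun w hw => ?_)
    by_contra hwL
    have hwIcc := hG'.1 w hw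
    simp only [Finset.mem_Icc] at hwIcc
    have hw0 : slt zero3 w := by simp only [slt, zero3]; omega
    have hwt : slt w (top3 n) := by simp only [slt, top3]; omega
    have hcomp : ∀ x ∈ L ++ [top3 n], slt x w ∨ slt w x := by
      intro x hx
      rcases List.mem_append.mp hx with hx | hx
      · refine hG'.2 x (hsub (List.mem_toFinset.mpr hx)) w hw
          (fun he => hwL (by rw [← he]; exact List.mem_toFinset.mpr hx))
      · simp only [List.mem_singleton] at hx
        subst hx
        exact Or.inr hwt
    have hlast : slt w ((L ++ [top3 n]).getLastD zero3) := by
      rw [List.getLastD_eq_getLast?, List.getLast?_concat]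
      exact hwt
    obtain ⟨X, c, d, Y, he, hcw, hwd⟩ := gap (L ++ [top3 n]) zero3 hslt hw0 hcomp hlast
    have hstep : step1 c d := by
      unfold FacetList at h
      rw [he] at h
      exact chain'_middle X Y c d h
    exact noRoom hstep hcw hwd

/-- Every facet has a facet listing. -/
lemma isFacet_facetList (n : ℕ) (F : Finset V) (hF : IsFacet n F) :
    ∃ L, FacetList n L ∧ L.toFinset = F := by
  obtain ⟨L, hL, hLfin⟩ := exists_chainList F hF.1.2
  refine ⟨L, ?_, hLfin⟩
  have hbound : ∀ x ∈ L, slt zero3 x ∧ slt x (top3 n) := by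
    intro x hx
    have := hF.1.1 x (by rw [← hLfin]; exact List.mem_toFinset.mpr hx)
    simp only [Finset.mem_Icc] at this
    constructor <;> (simp only [slt, zero3, top3]; omega)
  have hslt : List.Chain' slt (zero3 :: (L ++ [top3 n])) := by
    unfold List.Chain'; rw [List.isChain_cons]
    constructor
    · intro y hy
      rw [head?_append_singleton] at hy
      have hy' : y = L.headD (top3 n) := (by simpa using hy : _ = y).symm
      subst hy'
      cases L with
      | nil => simp only [List.headD, slt, zero3, top3]; omega
      | cons a L' => simpa [List.headD] using (hbound a (by simp)).1
    · apply List.IsChain.append hL (List.isChain_singleton _)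
      intro x hx y hy
      have hy' : y = top3 n := (by simpa using hy : _ = y).symm
      subst hy'
      have hxL : x ∈ L := List.mem_of_mem_getLast? hx
      exact (hbound x hxL).2
  by_contra hnc
  obtain ⟨X, c, d, Y, he, hncd⟩ := not_chain'_split _ hnc
  have hpw : List.Pairwise slt (zero3 :: (L ++ [top3 n])) := List.isChain_iff_pairwise.mp hslt
  have hcd : slt c d := by
    rw [he] at hslt
    exact chain'_middle X Y c d hslt
  have hbig : c.1 + 2 ≤ d.1 ∧ c.2.1 + 2 ≤ d.2.1 ∧ c.2.2 + 2 ≤ d.2.2 := by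
    have hno : ¬ (d.1 = c.1 + 1 ∨ d.2.1 = c.2.1 + 1 ∨ d.2.2 = c.2.2 + 1) :=
      fun ho => hncd ⟨hcd, ho⟩
    simp only [slt] at hcd
    omega
  have hdtop : d.1 ≤ n + 1 ∧ d.2.1 ≤ n + 1 ∧ d.2.2 ≤ n + 1 := by
    have hd : d ∈ zero3 :: (L ++ [top3 n]) := by rw [he]; simp
    rcases (by simpa using hd : d = zero3 ∨ d ∈ L ∨ d = top3 n) with rfl | hd' | rfl
    · simp only [slt, zero3] at hcd; omega
    · have := (hbound d hd').2; simp only [slt, top3] at this; omega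
    · simp [top3]
  set w : V := addD c 1 with hw
  have hpw2 : List.Pairwise slt (X ++ c :: d :: Y) := he ▸ hpw
  have hwd : slt w d := by simp only [slt, hw, addD]; omega
  have hcw : slt c w := by simp only [slt, hw, addD]; omega
  have hcompw : ∀ x ∈ F, slt w x ∨ slt x w := by
    intro x hx
    have hxmem : x ∈ X ++ c :: d :: Y := by
      rw [← he]
      simp only [List.mem_cons, List.mem_append]
      right; left
      rw [← List.mem_toFinset, hLfin]
      exact hx
    rcases List.mem_append.mp hxmem with hxX | hxcdY
    · have hxc : slt x c := (List.pairwise_append.mp hpw2).2.2 x hxX c (by simp)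
      exact Or.inr (slt_trans hxc hcw)
    · have hpwc : List.Pairwise slt (c :: d :: Y) := (List.pairwise_append.mp hpw2).2.1
      rcases (by simpa using hxcdY : x = c ∨ x = d ∨ x ∈ Y) with rfl | rfl | hxY
      · exact Or.inr hcw
      · exact Or.inl hwd
      · have hdx : slt d x := (List.pairwise_cons.mp (List.pairwise_cons.mp hpwc).2).1 x hxY
        exact Or.inl (slt_trans hwd hdx)
  have hface : IsFace n (insert w F) := by
    constructor
    · intro x hx
      rcases Finset.mem_insert.mp hx with rfl | hx
      · simp only [Finset.mem_Icc, hw, addD]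
        omega
      · exact hF.1.1 x hx
    · intro u hu v hv huv
      rcases Finset.mem_insert.mp hu with rfl | hu <;> rcases Finset.mem_insert.mp hv with rfl | hv
      · exact absurd rfl huv
      · exact hcompw v hv
      · exact (hcompw u hu).symm
      · exact hF.1.2 u hu v hv huv
  have heq := hF.2 _ hface (Finset.subset_insert _ _)
  have hwF : w ∈ F := heq ▸ Finset.mem_insert_self w F
  have hwpad : w ∈ X ++ c :: d :: Y := by
    rw [← he]
    simp only [List.mem_cons, List.mem_append]
    right; left
    rw [← List.mem_toFinset, hLfin]
    exact hwF
  rcases List.mem_append.mp hwpad with hwX | hwcdY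
  · have : slt w c := (List.pairwise_append.mp hpw2).2.2 w hwX c (by simp)
    exact slt_asymm this hcw
  · have hpwc : List.Pairwise slt (c :: d :: Y) := (List.pairwise_append.mp hpw2).2.1
    rcases (by simpa using hwcdY : w = c ∨ w = d ∨ w ∈ Y) with he' | he' | hwY
    · exact slt_irrefl c (he' ▸ hcw)
    · exact slt_irrefl d (he' ▸ hwd)
    · have : slt d w := (List.pairwise_cons.mp (List.pairwise_cons.mp hpwc).2).1 w hwY
      exact slt_asymm this hwd

/-! ### The counting lemma -/

lemma count_le (n : ℕ) (Fst : Finset V) :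
    ∀ (QG : List V) (c : V) (j : ℕ) (QF : List V),
      List.Chain' step1 (addD c j :: (QG ++ [top3 n])) →
      List.Chain' slt (c :: (QF ++ [top3 n])) →
      (∀ x : V, slt c x → (x ∈ Fst ↔ x ∈ QF.toFinset)) →
      (∀ A v B, QG = A ++ v :: B → v ∉ Fst → v = addD (A.getLastD (addD c j)) 1) →
      QF.length ≤ QG.length + j := by
  intro QG
  induction QG with
  | nil =>
    intro c j QF hG hF _ _
    have hstep : step1 (addD c j) (top3 n) := by
      simp only [List.nil_append] at hG
      exact (List.isChain_cons.mp hG).1 (top3 n) (by simp)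
    rcases hstep.2 with h1 | h1 | h1
    · have h2 := chainlenF (fun v => v.1) (fun u v h => h.1) QF c (top3 n) hF
      simp only [addD] at h1
      simp only [List.length_nil]
      omega
    · have h2 := chainlenF (fun v => v.2.1) (fun u v h => h.2.1) QF c (top3 n) hF
      simp only [addD] at h1
      simp only [List.length_nil]
      omega
    · have h2 := chainlenF (fun v => v.2.2) (fun u v h => h.2.2) QF c (top3 n) hF
      simp only [addD] at h1
      simp only [List.length_nil]
      omega
  | cons g QG ihq =>
    intro c j QF hG hF hmem h0
    have hG' : List.Chain' step1 (addD c j :: g :: (QG ++ [top3 n])) := by simpa using hG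
    have hcg : step1 (addD c j) g := (List.isChain_cons_cons.mp hG').1
    have hGtail : List.Chain' step1 (g :: (QG ++ [top3 n])) := (List.isChain_cons_cons.mp hG').2
    have hcg_slt : slt c g := by
      have := hcg.1
      simp only [slt, addD] at this ⊢
      omega
    by_cases hgF : g ∈ Fst
    · have hgQF : g ∈ QF := List.mem_toFinset.mp ((hmem g hcg_slt).mp hgF)
      obtain ⟨Pf, QF', hQFe⟩ := List.append_of_mem hgQF
      subst hQFe
      have hFre : List.Chain' slt ((c :: Pf) ++ (g :: (QF' ++ [top3 n]))) := by simpa using hF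
      obtain ⟨hF1, hF2, hbd⟩ := List.isChain_append.mp hFre
      have hPfg' : List.Chain' slt (c :: (Pf ++ [g])) := by
        have : List.Chain' slt ((c :: Pf) ++ [g]) := by
          apply List.IsChain.append hF1 (List.isChain_singleton g)
          intro x hx y hy
          have hy' : y = g := (by simpa using hy : _ = y).symm
          subst hy'
          exact hbd x hx y rfl
        simpa using this
      have hPfbound : Pf.length ≤ j := by
        rcases hcg.2 with h1 | h1 | h1
        · have h2 := chainlenF (fun v => v.1) (fun u v h => h.1) Pf c g hPfg'
          simp only [addD] at h1; omega
        · have h2 := chainlenF (fun v => v.2.1) (fun u v h => h.2.1) Pf c g hPfg'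
          simp only [addD] at h1; omega
        · have h2 := chainlenF (fun v => v.2.2) (fun u v h => h.2.2) Pf c g hPfg'
          simp only [addD] at h1; omega
      have hpwF : List.Pairwise slt ((c :: Pf) ++ (g :: (QF' ++ [top3 n]))) :=
        List.isChain_iff_pairwise.mp hFre
      have hrec : QF'.length ≤ QG.length + 0 := by
        apply ihq g 0 QF'
        · rw [addD_zero]; exact hGtail
        · exact hF2
        · intro x hgx
          constructor
          · intro hxF
            have hcx : slt c x := slt_trans hcg_slt hgx
            have hxQ : x ∈ Pf ++ g :: QF' := List.mem_toFinset.mp ((hmem x hcx).mp hxF)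
            rcases (by simpa using hxQ : x ∈ Pf ∨ x = g ∨ x ∈ QF') with hxPf | rfl | hxQ'
            · have : slt x g :=
                (List.pairwise_append.mp hpwF).2.2 x (by simp [hxPf]) g (by simp)
              exact absurd (slt_asymm this hgx) id
            · exact absurd (slt_irrefl x hgx) id
            · exact List.mem_toFinset.mpr hxQ'
          · intro hxQ'
            exact (hmem x (slt_trans hcg_slt hgx)).mpr (List.mem_toFinset.mpr (by simp [List.mem_toFinset.mp hxQ']))
        · intro A v B hdec hvF
          have := h0 (g :: A) v B (by rw [hdec]; simp) hvF
          rw [List.getLastD_cons] at this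
          rwa [addD_zero]
      simp only [List.length_append, List.length_cons]
      omega
    · have hgd := h0 [] g QG rfl hgF
      simp only [List.getLastD] at hgd
      have hg : g = addD c (j + 1) := by rw [hgd, addD_addD]
      have hrec : QF.length ≤ QG.length + (j + 1) := by
        apply ihq c (j + 1) QF
        · rw [← hg]; exact hGtail
        · exact hF
        · exact hmem
        · intro A v B hdec hvF
          have := h0 (g :: A) v B (by rw [hdec]; simp) hvF
          rw [List.getLastD_cons] at this
          rwa [← hg]
      simp only [List.length_cons]
      omega

/-! ### Diagonal lists -/

lemma diag_length : ∀ (k : ℕ) (p : V), (diag p k).length = k := by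
  intro k
  induction k with
  | zero => intro p; rfl
  | succ k ih => intro p; simp [diag, ih]

lemma diag_mem : ∀ (k : ℕ) (p : V) (x : V), x ∈ diag p k →
    ∃ m, 1 ≤ m ∧ m ≤ k ∧ x = addD p m := by
  intro k
  induction k with
  | zero => intro p x hx; simp [diag] at hx
  | succ k ih =>
    intro p x hx
    rcases (by simpa [diag] using hx : x = addD p 1 ∨ x ∈ diag (addD p 1) k) with rfl | hx'
    · exact ⟨1, le_refl 1, by omega, rfl⟩
    · obtain ⟨m, h1, h2, h3⟩ := ih _ _ hx'
      exact ⟨m + 1, by omega, by omega, by rw [h3, addD_addD, Nat.add_comm]⟩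

lemma diag_chain : ∀ (k : ℕ) (p q : V),
    p.1 + k < q.1 → p.2.1 + k < q.2.1 → p.2.2 + k < q.2.2 →
    (q.1 = p.1 + k + 1 ∨ q.2.1 = p.2.1 + k + 1 ∨ q.2.2 = p.2.2 + k + 1) →
    List.Chain' step1 (p :: (diag p k ++ [q])) := by
  intro k
  induction k with
  | zero =>
    intro p q h1 h2 h3 h4
    simp only [diag, List.nil_append]
    refine List.isChain_cons_cons.mpr ⟨⟨⟨h1, h2, h3⟩, ?_⟩, List.isChain_singleton q⟩
    omega
  | succ k ih =>
    intro p q h1 h2 h3 h4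
    show List.Chain' step1 (p :: ((addD p 1 :: diag (addD p 1) k) ++ [q]))
    rw [List.cons_append]
    refine List.isChain_cons_cons.mpr ⟨step1_addD_one p, ?_⟩
    apply ih (addD p 1) q <;> simp only [addD] <;> omega

/-! ### The surgery lemma -/

lemma surgery (n : ℕ) (G : Finset V) (A B : List V) (v : V)
    (hfl0 : FacetList n (A ++ v :: B)) (hGfin : (A ++ v :: B).toFinset = G)
    (hv : v ≠ addD (A.getLastD zero3) 1) :
    ∃ H : Finset V, IsFacet n H ∧ OPrec H G ∧ v ∉ H ∧ H ∩ G = G.erase v := by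
  have hre : zero3 :: ((A ++ v :: B) ++ [top3 n]) =
      (zero3 :: A) ++ (v :: (B ++ [top3 n])) := by simp
  have hfl : List.Chain' step1 ((zero3 :: A) ++ (v :: (B ++ [top3 n]))) := by
    rw [← hre]; exact hfl0
  set prev := A.getLastD zero3 with hprevdef
  set nxt := B.headD (top3 n) with hnxtdef
  obtain ⟨h1, h2, hb⟩ := List.isChain_append.mp hfl
  have hprevv : step1 prev v := hb prev (by rw [getLast?_cons_eq]; rfl) v rfl
  obtain ⟨hvhead, h3⟩ := List.isChain_cons.mp h2
  have hvn : step1 v nxt := hvhead nxt (by rw [head?_append_singleton]; rfl)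
  have hps : slt prev v := hprevv.1
  have hvs : slt v nxt := hvn.1
  set m := min (nxt.1 - prev.1) (min (nxt.2.1 - prev.2.1) (nxt.2.2 - prev.2.2)) with hmdef
  have hm2 : 2 ≤ m := by simp only [slt] at hps hvs; omega
  set k := m - 1 with hkdef
  have hk1 : 1 ≤ k := by omega
  have hdc : List.Chain' step1 (prev :: (diag prev k ++ [nxt])) := by
    apply diag_chain <;> (simp only [slt] at hps hvs; omega)
  set LH := A ++ (diag prev k ++ B) with hLHdef
  have hHpad : List.Chain' step1 (zero3 :: (LH ++ [top3 n])) := by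
    have e2 : zero3 :: (LH ++ [top3 n]) =
        (zero3 :: A) ++ (diag prev k ++ (B ++ [top3 n])) := by simp [hLHdef]
    rw [e2]
    apply List.IsChain.append h1
    · apply List.IsChain.append
      · exact (List.isChain_append.mp hdc.tail).1
      · exact h3
      · intro x hx y hy
        rw [head?_append_singleton] at hy
        have hy' : y = nxt := by
          rw [Option.mem_def, Option.some_inj] at hy
          exact hy.symm
        subst hy'
        exact (List.isChain_append.mp hdc.tail).2.2 x hx nxt rfl
    · intro x hx y hy
      have hx' : x = prev := by
        rw [getLast?_cons_eq, Option.mem_def, Option.some_inj] at hx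
        exact hx.symm
      have hy' : y = addD prev 1 := by
        obtain ⟨k', hk'⟩ : ∃ k', k = k' + 1 := ⟨k - 1, by omega⟩
        rw [hk'] at hy
        simp only [diag, List.cons_append, List.head?_cons] at hy
        rw [Option.mem_def, Option.some_inj] at hy
        exact hy.symm
      subst hx'; subst hy'
      exact step1_addD_one prev
  -- pairwise facts for the original list
  have hGpad_pw : List.Pairwise slt ((zero3 :: A) ++ (v :: (B ++ [top3 n]))) :=
    List.isChain_iff_pairwise.mp (List.IsChain.imp (fun _ _ h => h.1) hfl)
  obtain ⟨pwA, pwR, hAcross⟩ := List.pairwise_append.mp hGpad_pw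
  have hAv : ∀ a ∈ A, slt a v := fun a ha => hAcross a (by simp [ha]) v (by simp)
  have hvB : ∀ b ∈ B, slt v b := by
    have hh := (List.pairwise_cons.mp pwR).1
    exact fun b hb => hh b (by simp [hb])
  have hAprev : ∀ a ∈ A, a.1 ≤ prev.1 := by
    intro a ha
    exact le_getLastD A zero3 (List.IsChain.imp (fun _ _ h => h.1) h1) a (by simp [ha])
  have hBnxt : ∀ b ∈ B, nxt.1 ≤ b.1 := by
    intro b hb
    exact headD_le B (top3 n) (List.IsChain.imp (fun _ _ h => h.1) h3) b (by simp [hb])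
  -- freshness
  have hdA : ∀ x ∈ diag prev k, x ∉ A := by
    intro x hx hxA
    obtain ⟨mm, hm1, hmk, rfl⟩ := diag_mem _ _ _ hx
    have := hAprev _ hxA
    simp only [addD] at this
    omega
  have hdB : ∀ x ∈ diag prev k, x ∉ B := by
    intro x hx hxB
    obtain ⟨mm, hm1, hmk, rfl⟩ := diag_mem _ _ _ hx
    have h5 := hBnxt _ hxB
    simp only [addD] at h5
    omega
  have hdv : v ∉ diag prev k := by
    intro hv'
    obtain ⟨mm, hm1, hmk, he⟩ := diag_mem _ _ _ hv'
    rcases Nat.eq_or_lt_of_le hm1 with h | h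
    · exact hv (by rw [he, ← h])
    · rcases hprevv.2 with h6 | h6 | h6 <;> (rw [he] at h6; simp [addD] at h6; omega)
  have hvA : v ∉ A := fun h => slt_irrefl v (hAv v h)
  have hvB' : v ∉ B := fun h => slt_irrefl v (hvB v h)
  -- nodup
  have hGsub : List.Sublist (A ++ v :: B) ((zero3 :: A) ++ (v :: (B ++ [top3 n]))) :=
    List.Sublist.append (List.sublist_cons_self zero3 A)
      ((List.sublist_append_left B [top3 n]).cons₂ v)
  have hGpw : List.Pairwise slt (A ++ v :: B) := hGpad_pw.sublist hGsub
  have hGnd : (A ++ v :: B).Nodup := hGpw.imp (fun hab => slt_ne hab)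
  have hHpw : List.Pairwise slt LH := by
    have := List.isChain_iff_pairwise.mp (List.IsChain.imp (fun _ _ h => h.1) hHpad)
    exact (this.of_cons).sublist (List.sublist_append_left LH [top3 n])
  have hHnd : LH.Nodup := hHpw.imp (fun hab => slt_ne hab)
  have hvH : v ∉ LH.toFinset := by
    simp only [List.mem_toFinset, hLHdef, List.mem_append]
    rintro (h | h | h)
    · exact hvA h
    · exact hdv h
    · exact hvB' h
  have hHG : LH.toFinset ∩ G = G.erase v := by
    ext x
    simp only [Finset.mem_inter, Finset.mem_erase]
    constructor
    · rintro ⟨hxH, hxG⟩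
      refine ⟨fun he => hvH (he ▸ hxH), hxG⟩
    · rintro ⟨hxv, hxG⟩
      refine ⟨?_, hxG⟩
      rw [← hGfin] at hxG
      simp only [List.mem_toFinset, List.mem_append, List.mem_cons] at hxG
      simp only [List.mem_toFinset, hLHdef, List.mem_append]
      rcases hxG with h | h | h
      · exact Or.inl h
      · exact absurd h hxv
      · exact Or.inr (Or.inr h)
  have hlenH : LH.length = A.length + k + B.length := by
    simp only [hLHdef, List.length_append, diag_length]
    omega
  have hcardH : LH.toFinset.card = LH.length := List.toFinset_card_of_nodup hHnd
  have hcardG : G.card = A.length + 1 + B.length := by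
    rw [← hGfin, List.toFinset_card_of_nodup hGnd]
    simp only [List.length_append, List.length_cons]
    omega
  refine ⟨LH.toFinset, facetList_isFacet n LH hHpad, ?_, hvH, hHG⟩
  rcases Nat.lt_or_ge 1 k with hk2 | hk1'
  · left
    rw [hcardH, hlenH, hcardG]
    omega
  · have hkeq : k = 1 := by omega
    right
    refine ⟨by rw [hcardH, hlenH, hcardG]; omega, LH, A ++ v :: B, ?_, ?_, rfl, hGfin, ?_⟩
    · exact (List.isChain_append.mp (List.IsChain.imp (fun _ _ h => h.1) hHpad).tail).1
    · exact (List.isChain_append.mp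
        (List.IsChain.imp (fun _ _ h => h.1) hfl0 : List.Chain' slt _).tail).1
    · have hdiag1 : diag prev k = [addD prev 1] := by rw [hkeq]; rfl
      have hgoal : LH = A ++ (addD prev 1 :: B) := by rw [hLHdef, hdiag1]; rfl
      rw [hgoal]
      rw [sigmaWord_append, sigmaWord_append, sigmaWord_cons, sigmaWord_cons]
      apply lex_append_left
      have hps1 := hps
      simp only [slt] at hps1
      exact lex_triple _ _ (by simp [addD]; omega) (by simp [addD]; omega)
        (by simp [addD]; omega) (Ne.symm hv)

/-- Theorem 5.4: the order `O` is a shelling order of `Δ(n)`, via the Björner–Wachs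
criterion: for facets `F` preceding `G` there are a facet `H` preceding `G` and a vertex
`v ∈ G` with `F ∩ G ⊆ H ∩ G = G \ {v}`. -/
theorem shelling_order (n : ℕ) (hn : 1 ≤ n) (F G : Finset V)
    (hF : IsFacet n F) (hG : IsFacet n G) (hFG : OPrec F G) :
    ∃ H : Finset V, IsFacet n H ∧ OPrec H G ∧
      ∃ v ∈ G, F ∩ G ⊆ H ∩ G ∧ H ∩ G = G.erase v := by
  obtain ⟨LG, hLG, hLGfin⟩ := isFacet_facetList n G hG
  by_cases hsplit : ∃ A v B, LG = A ++ v :: B ∧ v ∉ F ∧ v ≠ addD (A.getLastD zero3) 1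
  · obtain ⟨A, v, B, hdec, hvF, hv⟩ := hsplit
    subst hdec
    obtain ⟨H, hHfacet, hHO, hvH, hHG⟩ := surgery n G A B v hLG hLGfin hv
    refine ⟨H, hHfacet, hHO, v, ?_, ?_, hHG⟩
    · rw [← hLGfin]; simp
    · intro x hx
      rw [hHG, Finset.mem_erase]
      obtain ⟨hxF, hxG⟩ := Finset.mem_inter.mp hx
      exact ⟨fun he => hvF (he ▸ hxF), hxG⟩
  · push_neg at hsplit
    exfalso
    obtain ⟨LF, hLF, hLFfin⟩ := isFacet_facetList n F hF
    rcases hFG with hcard | ⟨hcard, LF', LG', hcF, hcG, hfF, hfG, hlex⟩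
    · have hcount : LF.length ≤ LG.length + 0 := by
        apply count_le n F LG zero3 0 LF
        · rw [addD_zero]; exact hLG
        · exact facetList_chain_slt hLF
        · intro x _; rw [hLFfin]
        · intro A v B hdec hvF
          have := hsplit A v B hdec hvF
          rwa [addD_zero]
      have hFlen : F.card = LF.length := by
        rw [← hLFfin, List.toFinset_card_of_nodup (facetList_nodup hLF)]
      have hGlen : G.card = LG.length := by
        rw [← hLGfin, List.toFinset_card_of_nodup (facetList_nodup hLG)]
      omega
    · have hLG' : LG' = LG :=
        chainList_unique hcG (facetList_chain_inner hLG) (by rw [hfG, hLGfin])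
      have hLF' : LF' = LF :=
        chainList_unique hcF (facetList_chain_inner hLF) (by rw [hfF, hLFfin])
      rw [hLF', hLG'] at hlex
      have hlen : LF.length = LG.length := by
        have h1 : F.card = LF.length := by
          rw [← hLFfin, List.toFinset_card_of_nodup (facetList_nodup hLF)]
        have h2 : G.card = LG.length := by
          rw [← hLGfin, List.toFinset_card_of_nodup (facetList_nodup hLG)]
        omega
      have hne : LF ≠ LG := by
        rintro rfl
        exact lex_irrefl _ hlex
      obtain ⟨C, f, g, BF, BG, heF, heG, hfg⟩ := first_diff LF LG hlen hne
      set prev := C.getLastD zero3 with hprevdef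
      have hpadG : List.Chain' step1 ((zero3 :: C) ++ (g :: (BG ++ [top3 n]))) := by
        have h := hLG
        unfold FacetList at h
        rw [heG] at h
        simpa using h
      have hg1 : step1 prev g :=
        (List.isChain_append.mp hpadG).2.2 prev (by rw [getLast?_cons_eq]; rfl) g rfl
      have hpadF : List.Chain' slt ((zero3 :: C) ++ (f :: (BF ++ [top3 n]))) := by
        have h := facetList_chain_slt hLF
        rw [heF] at h
        simpa using h
      have hf1 : slt prev f :=
        (List.isChain_append.mp hpadF).2.2 prev (by rw [getLast?_cons_eq]; rfl) f rfl
      have hgF : g ∉ F := by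
        intro hgFmem
        have hgLF : g ∈ LF := by
          rw [← List.mem_toFinset, hLFfin]; exact hgFmem
        rw [heF] at hgLF
        have hpwG : List.Pairwise slt ((zero3 :: C) ++ (g :: (BG ++ [top3 n]))) :=
          List.isChain_iff_pairwise.mp (List.IsChain.imp (fun _ _ h => h.1) hpadG)
        have hpwF : List.Pairwise slt ((zero3 :: C) ++ (f :: (BF ++ [top3 n]))) :=
          List.isChain_iff_pairwise.mp hpadF
        rcases (by simpa using hgLF : g ∈ C ∨ g = f ∨ g ∈ BF) with hgC | he' | hgBF
        · have : slt g g :=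
            (List.pairwise_append.mp hpwG).2.2 g (by simp [hgC]) g (by simp)
          exact slt_irrefl g this
        · exact hfg he'.symm
        · have hfg' : slt f g := by
            have := (List.pairwise_cons.mp (List.pairwise_append.mp hpwF).2.1).1
            exact this g (by simp [hgBF])
          exact noRoom hg1 hf1 hfg'
      have hgd := hsplit C g BG heG hgF
      rw [heF, heG] at hlex
      rw [sigmaWord_append, sigmaWord_append, sigmaWord_cons, sigmaWord_cons] at hlex
      have hlex' := lex_cancel _ hlex
      have hps1 := hf1
      simp only [slt] at hps1
      apply lex_ge_false (sigmaWord BF) (sigmaWord BG) ?_ ?_ ?_ hfg hlex'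
      · rw [hgd, ← hprevdef]; simp only [addD]; omega
      · rw [hgd, ← hprevdef]; simp only [addD]; omega
      · rw [hgd, ← hprevdef]; simp only [addD]; omega
end
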